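/- Let T be a tree with n leaves, L ⊆ leaves(T), τ ≥ 0, and let T_{L,τ} be the flow graph obtained by adding a source s connected to each leaf with capacity τ and a sink t connected to each vertex of L with capacity ∞. If the minimum s-t cut in T_{L,τ} has value strictly less than τ·n, then Ψ̂_T(L) < τ. -/

import Mathlib

open Finset
open scoped ENNReal

/-- Weight of the (directed) cut leaving `S` in a graph with capacities `c`. -/
noncomputable def treeCutE {V : Type*} [Fintype V] [DecidableEq V] (c : V → V → ℝ≥0∞)
    (S : Finset V) : ℝ≥0∞ :=
  ∑ u ∈ S, ∑ v ∈ Sᶜ, c u v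

/-- `λ(A,B)`: minimum weight of a cut separating `A` from `B`. -/
noncomputable def lamE {V : Type*} [Fintype V] [DecidableEq V] (c : V → V → ℝ≥0∞)
    (A B : Finset V) : ℝ≥0∞ :=
  ⨅ S ∈ {S : Finset V | A ⊆ S ∧ Disjoint S B}, treeCutE c S

/-- `Ψ̂_T(L)` for the tree with edge weights `w` and leaf set `leaves`. -/
noncomputable def PsiHatE {V : Type*} [Fintype V] [DecidableEq V] (w : V → V → ℝ≥0∞)
    (leaves L : Finset V) : ℝ≥0∞ :=
  ⨅ S ∈ {S : Finset V | S.Nonempty ∧ S ⊆ leaves \ L},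
    lamE w S (leaves \ S) / (S.card : ℝ≥0∞)

/-- Capacities of the flow graph `T_{L,τ}`: all tree edges, an edge of capacity `τ` between
the source `s = Sum.inr true` and every leaf, and an edge of capacity `∞` between every
vertex of `L` and the sink `t = Sum.inr false`. -/
noncomputable def flowW {V : Type*} [DecidableEq V] (w : V → V → ℝ≥0∞)
    (leaves L : Finset V) (τ : ℝ≥0∞) : (V ⊕ Bool) → (V ⊕ Bool) → ℝ≥0∞
  | Sum.inl u, Sum.inl v => w u v
  | Sum.inr true, Sum.inl v => if v ∈ leaves then τ else 0
  | Sum.inl v, Sum.inr true => if v ∈ leaves then τ else 0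
  | Sum.inl v, Sum.inr false => if v ∈ L then ⊤ else 0
  | Sum.inr false, Sum.inl v => if v ∈ L then ⊤ else 0
  | Sum.inr _, Sum.inr _ => 0

/-- The value of the minimum `s`-`t` cut (= maximum `s`-`t` flow) in `T_{L,τ}`. -/
noncomputable def minSTcut {V : Type*} [Fintype V] [DecidableEq V] (w : V → V → ℝ≥0∞)
    (leaves L : Finset V) (τ : ℝ≥0∞) : ℝ≥0∞ :=
  lamE (flowW w leaves L τ) {Sum.inr true} {Sum.inr false}

/-- if the minimum `s`-`t` cut in `T_{L,τ}` has value strictly less than `τ·n`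
(`n` the number of leaves of the tree `T`), then `Ψ̂_T(L) < τ`. -/
theorem stmt4 {V : Type*} [Fintype V] [DecidableEq V]
    (T : SimpleGraph V) [DecidableRel T.Adj] (hT : T.IsTree)
    (w : V → V → ℝ≥0∞) (hsymm : ∀ u v, w u v = w v u)
    (hsupp : ∀ u v, w u v ≠ 0 → T.Adj u v) (hfin : ∀ u v, w u v ≠ ⊤)
    (leaves : Finset V) (hleaves : leaves = Finset.univ.filter (fun x => T.degree x = 1))
    (L : Finset V) (hL : L ⊆ leaves) (τ : ℝ≥0∞) (hτ : τ ≠ ⊤)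
    (h : minSTcut w leaves L τ < τ * (leaves.card : ℝ≥0∞)) :
    PsiHatE w leaves L < τ := by
  classical
  have hntop : τ * (leaves.card : ℝ≥0∞) ≠ ⊤ := ENNReal.mul_ne_top hτ (ENNReal.natCast_ne_top _)
  rw [minSTcut, lamE] at h
  simp only [Set.mem_setOf_eq, iInf_lt_iff, Finset.singleton_subset_iff,
    Finset.disjoint_singleton_right] at h
  obtain ⟨S, ⟨hs, ht⟩, hcut⟩ := h
  set P : V → Prop := fun v => Sum.inl v ∈ S with hP
  set S' : Finset V := leaves.filter P with hS'
  set Sd : Finset V := leaves.filter (fun v => ¬ P v) with hSd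
  set S₀ : Finset V := Finset.univ.filter P with hS₀
  -- no vertex of L lies in S (else the cut would be infinite)
  have hLnot : ∀ u ∈ L, ¬ P u := by
    intro u hu hPu
    have h1 : (⊤ : ℝ≥0∞) ≤ treeCutE (flowW w leaves L τ) S := by
      have hmem : (Sum.inr false : V ⊕ Bool) ∈ Sᶜ := Finset.mem_compl.2 ht
      calc (⊤:ℝ≥0∞) = flowW w leaves L τ (Sum.inl u) (Sum.inr false) := by
            simp [flowW, hu]
        _ ≤ ∑ v ∈ Sᶜ, flowW w leaves L τ (Sum.inl u) v :=
            Finset.single_le_sum (fun _ _ => zero_le) hmem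
        _ ≤ _ := Finset.single_le_sum (f := fun x => ∑ v ∈ Sᶜ, flowW w leaves L τ x v)
            (fun _ _ => zero_le) hPu
    exact absurd (lt_of_le_of_lt h1 hcut) (by simp)
  -- lower bound on the cut value
  have key : τ * (Sd.card : ℝ≥0∞) + treeCutE w S₀ ≤ treeCutE (flowW w leaves L τ) S := by
    have hsub : insert (Sum.inr true : V ⊕ Bool) (S₀.image Sum.inl) ⊆ S := by
      intro x hx
      rcases Finset.mem_insert.1 hx with rfl | hx
      · exact hs
      · obtain ⟨v, hv, rfl⟩ := Finset.mem_image.1 hx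
        exact (Finset.mem_filter.1 hv).2
    have hnotmem : (Sum.inr true : V ⊕ Bool) ∉ S₀.image Sum.inl := by simp
    calc τ * (Sd.card : ℝ≥0∞) + treeCutE w S₀
        = (∑ v ∈ Sd.image Sum.inl, flowW w leaves L τ (Sum.inr true) v)
          + ∑ u ∈ S₀, ∑ v ∈ (S₀ᶜ).image Sum.inl, flowW w leaves L τ (Sum.inl u) v := by
          congr 1
          · rw [Finset.sum_image (by simp)]
            have hterm : ∀ v ∈ Sd, flowW w leaves L τ (Sum.inr true) (Sum.inl v) = τ := by
              intro v hv
              simp [flowW, (Finset.mem_filter.1 hv).1]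
            rw [Finset.sum_congr rfl hterm, Finset.sum_const, nsmul_eq_mul, mul_comm]
          · rw [treeCutE]
            refine Finset.sum_congr rfl fun u hu => ?_
            rw [Finset.sum_image (by simp)]
            rfl
      _ ≤ (∑ v ∈ Sᶜ, flowW w leaves L τ (Sum.inr true) v)
          + ∑ u ∈ S₀, ∑ v ∈ Sᶜ, flowW w leaves L τ (Sum.inl u) v := by
          refine add_le_add (Finset.sum_le_sum_of_subset ?_)
            (Finset.sum_le_sum fun u _ => Finset.sum_le_sum_of_subset ?_)
          · intro x hx
            obtain ⟨v, hv, rfl⟩ := Finset.mem_image.1 hx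
            exact Finset.mem_compl.2 (Finset.mem_filter.1 hv).2
          · intro x hx
            obtain ⟨v, hv, rfl⟩ := Finset.mem_image.1 hx
            refine Finset.mem_compl.2 ?_
            have := Finset.mem_compl.1 hv
            simpa [hS₀, hP] using this
      _ = ∑ u ∈ insert (Sum.inr true : V ⊕ Bool) (S₀.image Sum.inl),
            ∑ v ∈ Sᶜ, flowW w leaves L τ u v := by
          rw [Finset.sum_insert hnotmem, Finset.sum_image (by simp)]
      _ ≤ _ := Finset.sum_le_sum_of_subset hsub
  have hcards : S'.card + Sd.card = leaves.card :=
    Finset.card_filter_add_card_filter_not (p := P)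
  have hdtop : τ * (Sd.card : ℝ≥0∞) ≠ ⊤ := ENNReal.mul_ne_top hτ (ENNReal.natCast_ne_top _)
  have hmain : treeCutE w S₀ < τ * (S'.card : ℝ≥0∞) := by
    have h2 : τ * (Sd.card : ℝ≥0∞) + treeCutE w S₀
        < τ * (Sd.card : ℝ≥0∞) + τ * (S'.card : ℝ≥0∞) := by
      have : τ * (Sd.card : ℝ≥0∞) + τ * (S'.card : ℝ≥0∞) = τ * (leaves.card : ℝ≥0∞) := by
        rw [← mul_add, ← Nat.cast_add, add_comm, hcards]
      rw [this]
      exact lt_of_le_of_lt key hcut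
    exact (ENNReal.add_lt_add_iff_left hdtop).1 h2
  have hne : S'.Nonempty := by
    rcases S'.eq_empty_or_nonempty with he | hne
    · rw [he] at hmain; simp at hmain
    · exact hne
  have hcard0 : (S'.card : ℝ≥0∞) ≠ 0 := by
    simpa using Finset.card_ne_zero_of_mem hne.choose_spec
  have hsubL : S' ⊆ leaves \ L := by
    intro v hv
    have h1 := Finset.mem_filter.1 hv
    exact Finset.mem_sdiff.2 ⟨h1.1, fun hvL => hLnot v hvL h1.2⟩
  have hlam : lamE w S' (leaves \ S') ≤ treeCutE w S₀ := by
    have hmem : S₀ ∈ {T : Finset V | S' ⊆ T ∧ Disjoint T (leaves \ S')} := by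
      constructor
      · intro v hv
        exact Finset.mem_filter.2 ⟨Finset.mem_univ v, (Finset.mem_filter.1 hv).2⟩
      · rw [Finset.disjoint_left]
        intro v hv hv'
        have h1 := Finset.mem_sdiff.1 hv'
        exact h1.2 (Finset.mem_filter.2 ⟨h1.1, (Finset.mem_filter.1 hv).2⟩)
    exact iInf₂_le S₀ hmem
  have hPsi : PsiHatE w leaves L ≤ lamE w S' (leaves \ S') / (S'.card : ℝ≥0∞) :=
    iInf₂_le S' ⟨hne, hsubL⟩
  refine lt_of_le_of_lt hPsi ?_
  refine lt_of_le_of_lt (ENNReal.div_le_div_right hlam _) ?_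
  exact (ENNReal.div_lt_iff (Or.inl hcard0) (Or.inl (ENNReal.natCast_ne_top _))).2 hmain
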